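/- Let m ≥ 3 and let θ = (m−2, m−1)(m, m+1) ∈ Alt(m+1), the product of the two transpositions swapping m−2 with m−1 and m with m+1. Regard Alt(m) as the subgroup of Alt(m+1) consisting of the even permutations of {1, …, m+1} fixing the point m+1. Then for every φ ∈ Alt(m+1) there exist ψ_1, ψ_2, ψ_3 ∈ Alt(m) such that φ = ψ_1 θ ψ_2 θ ψ_3. -/
import Mathlib

theorem stmt_8_aux {α : Type*} [DecidableEq α] [Fintype α]
    (hcard : 4 ≤ Fintype.card α)
    (r q p mm z o : α)
    (ne_rq : r ≠ q) (ne_pmm : p ≠ mm) (ne_mmr : mm ≠ r) (ne_mmq : mm ≠ q)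
    (ne_pr : p ≠ r) (ne_pq : p ≠ q) (ne_pz : p ≠ z) (ne_po : p ≠ o)
    (ne_zo : z ≠ o) (ne_mmz : mm ≠ z) (ne_mmo : mm ≠ o)
    (θ : Equiv.Perm α) (hθ : θ = Equiv.swap r q * Equiv.swap p mm)
    (φ : Equiv.Perm α) (hφ : φ ∈ alternatingGroup α) :
    ∃ ψ₁ ψ₂ ψ₃ : Equiv.Perm α,
      (ψ₁ ∈ alternatingGroup α ∧ ψ₁ mm = mm) ∧
      (ψ₂ ∈ alternatingGroup α ∧ ψ₂ mm = mm) ∧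
      (ψ₃ ∈ alternatingGroup α ∧ ψ₃ mm = mm) ∧
      φ = ψ₁ * θ * ψ₂ * θ * ψ₃ := by
  -- θ is even
  have hθA : θ ∈ alternatingGroup α := by
    rw [Equiv.Perm.mem_alternatingGroup, hθ, map_mul,
      Equiv.Perm.sign_swap ne_rq, Equiv.Perm.sign_swap ne_pmm]
    decide
  -- θ⁻¹ computations
  have hθinv : θ⁻¹ = Equiv.swap p mm * Equiv.swap r q := by
    rw [hθ, mul_inv_rev, Equiv.swap_inv, Equiv.swap_inv]
  have hθi_mm : θ⁻¹ mm = p := by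
    rw [hθinv, Equiv.Perm.mul_apply,
      Equiv.swap_apply_of_ne_of_ne ne_mmr ne_mmq, Equiv.swap_apply_right]
  have hθi_p : θ⁻¹ p = mm := by
    rw [hθinv, Equiv.Perm.mul_apply,
      Equiv.swap_apply_of_ne_of_ne ne_pr ne_pq, Equiv.swap_apply_left]
  -- choose ψ₃
  have key3 : ∃ ψ₃ : Equiv.Perm α, ψ₃ ∈ alternatingGroup α ∧
      ψ₃ mm = mm ∧ φ (ψ₃⁻¹ p) ≠ mm := by
    by_cases ht : φ p = mm
    · refine ⟨Equiv.swap p z * Equiv.swap z o, ?_, ?_, ?_⟩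
      · rw [Equiv.Perm.mem_alternatingGroup, map_mul,
          Equiv.Perm.sign_swap ne_pz, Equiv.Perm.sign_swap ne_zo]
        decide
      · rw [Equiv.Perm.mul_apply,
          Equiv.swap_apply_of_ne_of_ne ne_mmz ne_mmo,
          Equiv.swap_apply_of_ne_of_ne ne_pmm.symm ne_mmz]
      · have h1 : (Equiv.swap p z * Equiv.swap z o)⁻¹ p = o := by
          rw [mul_inv_rev, Equiv.swap_inv, Equiv.swap_inv, Equiv.Perm.mul_apply,
            Equiv.swap_apply_left, Equiv.swap_apply_left]
        rw [h1]
        intro h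
        exact ne_po (φ.injective (ht.trans h.symm))
    · exact ⟨1, one_mem _, rfl, by simpa using ht⟩
  obtain ⟨ψ₃, hψ₃A, hψ₃m, hk⟩ := key3
  -- choose ψ₁
  have key1 : ∃ ψ₁ : Equiv.Perm α, ψ₁ ∈ alternatingGroup α ∧
      ψ₁ mm = mm ∧ ψ₁⁻¹ (φ (ψ₃⁻¹ p)) = p := by
    by_cases hkp : φ (ψ₃⁻¹ p) = p
    · exact ⟨1, one_mem _, rfl, by simpa using hkp⟩
    · have hc : ∃ c : α, c ≠ p ∧ c ≠ φ (ψ₃⁻¹ p) ∧ c ≠ mm := by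
        by_contra h
        push_neg at h
        have hsub : (Finset.univ : Finset α) ⊆ {p, φ (ψ₃⁻¹ p), mm} := by
          intro c _
          simp only [Finset.mem_insert, Finset.mem_singleton]
          by_cases h1 : c = p
          · exact Or.inl h1
          · by_cases h2 : c = φ (ψ₃⁻¹ p)
            · exact Or.inr (Or.inl h2)
            · exact Or.inr (Or.inr (h c h1 h2))
        have hcard2 := Finset.card_le_card hsub
        have h3 : ({p, φ (ψ₃⁻¹ p), mm} : Finset α).card ≤ 3 := by
          apply le_trans (Finset.card_insert_le _ _)
          apply Nat.succ_le_succ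
          apply le_trans (Finset.card_insert_le _ _)
          simp
        rw [Finset.card_univ] at hcard2
        omega
      obtain ⟨c, hcp, hck, hcmm⟩ := hc
      refine ⟨Equiv.swap p (φ (ψ₃⁻¹ p)) * Equiv.swap (φ (ψ₃⁻¹ p)) c, ?_, ?_, ?_⟩
      · rw [Equiv.Perm.mem_alternatingGroup, map_mul,
          Equiv.Perm.sign_swap (fun h => hkp h.symm),
          Equiv.Perm.sign_swap (fun h => hck h.symm)]
        decide
      · rw [Equiv.Perm.mul_apply,
          Equiv.swap_apply_of_ne_of_ne (Ne.symm hk) (Ne.symm hcmm),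
          Equiv.swap_apply_of_ne_of_ne ne_pmm.symm (Ne.symm hk)]
      · rw [mul_inv_rev, Equiv.swap_inv, Equiv.swap_inv, Equiv.Perm.mul_apply,
          Equiv.swap_apply_right,
          Equiv.swap_apply_of_ne_of_ne (fun h => hkp h.symm) (Ne.symm hcp)]
  obtain ⟨ψ₁, hψ₁A, hψ₁m, hψ₁k⟩ := key1
  refine ⟨ψ₁, θ⁻¹ * ψ₁⁻¹ * φ * ψ₃⁻¹ * θ⁻¹, ψ₃, ⟨hψ₁A, hψ₁m⟩, ⟨?_, ?_⟩,
    ⟨hψ₃A, hψ₃m⟩, by group⟩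
  · exact mul_mem (mul_mem (mul_mem (mul_mem (inv_mem hθA) (inv_mem hψ₁A)) hφ)
      (inv_mem hψ₃A)) (inv_mem hθA)
  · show θ⁻¹ (ψ₁⁻¹ (φ (ψ₃⁻¹ (θ⁻¹ mm)))) = mm
    rw [hθi_mm, hψ₁k, hθi_p]

/-- Let `m ≥ 3` and `θ = (m-2 m-1)(m m+1) ∈ Alt(m+1)` (in 0-indexed form on
`Fin (m+1) = {0, …, m}`: the product of the swaps `(m-3, m-2)` and `(m-1, m)`).
Regarding `Alt(m)` as the even permutations of `{0, …, m}` fixing the last point `m`,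
every `φ ∈ Alt(m+1)` can be written as `φ = ψ₁ θ ψ₂ θ ψ₃` with `ψᵢ ∈ Alt(m)`. -/
theorem stmt_8 (m : ℕ) (hm : 3 ≤ m)
    (θ : Equiv.Perm (Fin (m + 1)))
    (hθ : θ = Equiv.swap ⟨m - 3, by omega⟩ ⟨m - 2, by omega⟩ *
              Equiv.swap ⟨m - 1, by omega⟩ ⟨m, by omega⟩)
    (φ : Equiv.Perm (Fin (m + 1))) (hφ : φ ∈ alternatingGroup (Fin (m + 1))) :
    ∃ ψ₁ ψ₂ ψ₃ : Equiv.Perm (Fin (m + 1)),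
      (ψ₁ ∈ alternatingGroup (Fin (m + 1)) ∧ ψ₁ ⟨m, by omega⟩ = ⟨m, by omega⟩) ∧
      (ψ₂ ∈ alternatingGroup (Fin (m + 1)) ∧ ψ₂ ⟨m, by omega⟩ = ⟨m, by omega⟩) ∧
      (ψ₃ ∈ alternatingGroup (Fin (m + 1)) ∧ ψ₃ ⟨m, by omega⟩ = ⟨m, by omega⟩) ∧
      φ = ψ₁ * θ * ψ₂ * θ * ψ₃ := by
  refine stmt_8_aux ?_
    ⟨m - 3, by omega⟩ ⟨m - 2, by omega⟩ ⟨m - 1, by omega⟩ ⟨m, by omega⟩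
    ⟨0, by omega⟩ ⟨1, by omega⟩
    ?_ ?_ ?_ ?_ ?_ ?_ ?_ ?_ ?_ ?_ ?_ θ hθ φ hφ
  all_goals first
    | (simp only [Fintype.card_fin]; omega)
    | (simp only [ne_eq, Fin.mk.injEq]; omega)
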